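/- Let q ≥ 5 be a prime and let r, s ≥ 2 be integers. Then the distinguishing chromatic number of the graph LG_q ⊗ K_{r,s} equals r + s + 1. -/

import Mathlib

/-- A permutation of the vertices is an automorphism of the simple graph `G` if it
preserves adjacency (and hence non-adjacency). -/
def IsGraphAutomorphism {V : Type*} (G : SimpleGraph V) (σ : Equiv.Perm V) : Prop :=
  ∀ u v : V, G.Adj (σ u) (σ v) ↔ G.Adj u v

/-- A proper coloring is distinguishing if the only automorphism mapping every color
class to itself is the identity. -/
def IsDistinguishing {V : Type*} (G : SimpleGraph V) {α : Type*} (C : G.Coloring α) : Prop :=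
  ∀ σ : Equiv.Perm V, IsGraphAutomorphism G σ → (∀ v, C (σ v) = C v) → σ = 1

/-- The distinguishing chromatic number: the least number of colors of a proper
distinguishing coloring. -/
noncomputable def distChromNum {V : Type*} (G : SimpleGraph V) : ℕ :=
  sInf {n : ℕ | ∃ C : G.Coloring (Fin n), IsDistinguishing G C}

/-- The `d`-dimensional subspaces of `F³`. -/
abbrev SubspaceDim (F : Type*) [Field F] (d : ℕ) :=
  {W : Submodule F (Fin 3 → F) // Module.finrank F W = d}

/-- The adjacency relation of the graph `LG_q ⊗ K_{r,s}`: a point-copy `(p, i)` is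
adjacent to a line-copy `(l, j)` iff `p ⊆ l`; there are no other adjacencies. -/
def LeviTensorAdj (F : Type*) [Field F] (r s : ℕ) :
    (SubspaceDim F 1 × Fin r) ⊕ (SubspaceDim F 2 × Fin s) →
      (SubspaceDim F 1 × Fin r) ⊕ (SubspaceDim F 2 × Fin s) → Prop
  | Sum.inl p, Sum.inr l => p.1.1 ≤ l.1.1
  | Sum.inr l, Sum.inl p => p.1.1 ≤ l.1.1
  | Sum.inl _, Sum.inl _ => False
  | Sum.inr _, Sum.inr _ => False

/-- The graph `LG_q ⊗ K_{r,s}` on vertex set `(P × [r]) ⊔ (L × [s])`, where `P` is the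
set of points (1-dimensional subspaces) and `L` the set of lines (2-dimensional
subspaces) of `F³`. -/
def LeviTensor (F : Type*) [Field F] (r s : ℕ) :
    SimpleGraph ((SubspaceDim F 1 × Fin r) ⊕ (SubspaceDim F 2 × Fin s)) where
  Adj := LeviTensorAdj F r s
  symm := by
    constructor
    rintro (p | l) (p' | l') h
    · exact h.elim
    · exact h
    · exact h
    · exact h.elim
  loopless := by
    constructor
    rintro (p | l) h
    · exact h.elim
    · exact h.elim

open Submodule Module

variable {F : Type} [Field F]

abbrev V3 (F : Type) [Field F] := Fin 3 → F

@[simp] lemma vec3_two {α : Type*} (a b c : α) : ![a, b, c] 2 = c := rfl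

namespace LT16

abbrev Pt (F : Type) [Field F] := {W : Submodule F (V3 F) // finrank F W = 1}
abbrev Ln (F : Type) [Field F] := {W : Submodule F (V3 F) // finrank F W = 2}

lemma frank3 : finrank F (V3 F) = 3 := by simp

def ptMk (v : V3 F) (hv : v ≠ 0) : Pt F := ⟨span F {v}, finrank_span_singleton hv⟩

lemma pt_rep (p : Pt F) : ∃ v : V3 F, v ≠ 0 ∧ p.1 = span F {v} := by
  obtain ⟨v, hv0, hv⟩ := finrank_eq_one_iff'.mp p.2
  refine ⟨v.1, by simpa using hv0, le_antisymm ?_ ?_⟩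
  · exact fun w hw => by
      obtain ⟨c, hc⟩ := hv ⟨w, hw⟩
      exact (mem_span_singleton).mpr ⟨c, congrArg Subtype.val hc⟩
  · exact (span_singleton_le_iff_mem _ _).mpr v.2

lemma inf_eq_bot_of_ne {p q : Pt F} (h : p ≠ q) : p.1 ⊓ q.1 = ⊥ := by
  by_contra hb
  have h1 : 1 ≤ finrank F (p.1 ⊓ q.1 : Submodule F (V3 F)) := by
    rwa [Nat.one_le_iff_ne_zero, ne_eq, Submodule.finrank_eq_zero]
  have hp : p.1 ⊓ q.1 = p.1 := eq_of_le_of_finrank_le inf_le_left (by omega)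
  have hq : p.1 ⊓ q.1 = q.1 := eq_of_le_of_finrank_le inf_le_right (by omega)
  exact h (Subtype.ext (hp ▸ hq))

lemma join_rank2 {p q : Pt F} (h : p ≠ q) :
    finrank F (p.1 ⊔ q.1 : Submodule F (V3 F)) = 2 := by
  have := Submodule.finrank_sup_add_finrank_inf_eq p.1 q.1
  rw [inf_eq_bot_of_ne h, finrank_bot, p.2, q.2] at this
  omega

def lineMk (p q : Pt F) (h : p ≠ q) : Ln F := ⟨p.1 ⊔ q.1, join_rank2 h⟩

lemma line_eq_join {l : Ln F} {p q : Pt F} (h : p ≠ q) (hp : p.1 ≤ l.1) (hq : q.1 ≤ l.1) :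
    l.1 = p.1 ⊔ q.1 :=
  (eq_of_le_of_finrank_le (sup_le hp hq) (by rw [join_rank2 h, l.2])).symm

lemma point_unique {l l' : Ln F} (hll : l ≠ l') {p q : Pt F}
    (hp : p.1 ≤ l.1) (hp' : p.1 ≤ l'.1) (hq : q.1 ≤ l.1) (hq' : q.1 ≤ l'.1) : p = q := by
  by_contra hpq
  have h1 : l.1 = p.1 ⊔ q.1 := line_eq_join hpq hp hq
  have h2 : l'.1 = p.1 ⊔ q.1 := line_eq_join hpq hp' hq'
  exact hll (Subtype.ext (h1.trans h2.symm))


lemma line_ne_top (l : Ln F) : l.1 ≠ ⊤ := fun h => by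
  have := l.2; rw [h, finrank_top, frank3] at this; omega

lemma exists_vec_not_mem (l : Ln F) : ∃ v : V3 F, v ∉ l.1 := by
  by_contra h
  push_neg at h
  exact line_ne_top l (eq_top_iff.mpr fun v _ => h v)

lemma pencil_sep {p q : Pt F} (h : p ≠ q) : ∃ l : Ln F, p.1 ≤ l.1 ∧ ¬ q.1 ≤ l.1 := by
  obtain ⟨v, hv⟩ := exists_vec_not_mem (lineMk p q h)
  have hvp : v ∉ p.1 := fun hm => hv (le_sup_left (a := p.1) (b := q.1) hm)
  have hv0 : v ≠ 0 := fun h0 => hvp (h0 ▸ zero_mem _)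
  have hne : p ≠ ptMk v hv0 := fun he => hvp (by
    rw [he]; exact mem_span_singleton_self v)
  refine ⟨lineMk p (ptMk v hv0) hne, le_sup_left, fun hq => ?_⟩
  have hp : p.1 ≤ (lineMk p (ptMk v hv0) hne).1 := le_sup_left
  have heq := line_eq_join h hp hq
  have hvmem : v ∈ (lineMk p (ptMk v hv0) hne).1 :=
    le_sup_right (a := p.1) (b := (ptMk v hv0).1) (mem_span_singleton_self v)
  rw [heq] at hvmem
  exact hv hvmem

lemma points_sep {l l' : Ln F} (h : l ≠ l') : ∃ p : Pt F, p.1 ≤ l.1 ∧ ¬ p.1 ≤ l'.1 := by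
  have hle : ¬ l.1 ≤ l'.1 := fun hle =>
    h (Subtype.ext (eq_of_le_of_finrank_le hle (by rw [l.2, l'.2])))
  obtain ⟨v, hvl, hvl'⟩ := SetLike.not_le_iff_exists.mp hle
  have hv0 : v ≠ 0 := fun h0 => hvl' (h0 ▸ zero_mem _)
  exact ⟨ptMk v hv0, (span_singleton_le_iff_mem _ _).mpr hvl,
    fun hc => hvl' (hc (mem_span_singleton_self v))⟩

lemma point_eq_of_pencil {p q : Pt F} (h : ∀ l : Ln F, p.1 ≤ l.1 ↔ q.1 ≤ l.1) : p = q := by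
  by_contra hne
  obtain ⟨l, hp, hq⟩ := pencil_sep hne
  exact hq ((h l).mp hp)

lemma line_eq_of_points {l l' : Ln F} (h : ∀ p : Pt F, p.1 ≤ l.1 ↔ p.1 ≤ l'.1) : l = l' := by
  by_contra hne
  obtain ⟨p, hp, hq⟩ := points_sep hne
  exact hq ((h p).mp hp)

lemma indep_span_ne {a b : V3 F} (h : LinearIndependent F ![a, b]) :
    span F {a} ≠ span F {b} := by
  intro he
  obtain ⟨c, hc⟩ := mem_span_singleton.mp (he ▸ mem_span_singleton_self b)
  obtain ⟨h1, h2⟩ := (LinearIndependent.pair_iff.mp h) c (-1)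
    (by rw [← hc]; module)
  norm_num at h2

lemma line_basis (l : Ln F) : ∃ a b : V3 F, LinearIndependent F ![a, b] ∧
    l.1 = span F {a, b} := by
  have b := finBasisOfFinrankEq F l.1 l.2
  have h1 : LinearIndependent F (fun i => ((b i : l.1) : V3 F)) :=
    b.linearIndependent.map' l.1.subtype (Submodule.ker_subtype l.1)
  refine ⟨(b 0 : l.1), (b 1 : l.1), ?_, ?_⟩
  · convert h1 using 1
    ext i
    fin_cases i <;> rfl
  · have hb := Basis.span_eq b
    conv_lhs => rw [← Submodule.map_subtype_top l.1]
    rw [← hb, Submodule.map_span]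
    congr 1
    ext x
    constructor
    · rintro ⟨y, ⟨i, rfl⟩, rfl⟩
      fin_cases i
      · exact Set.mem_insert _ _
      · exact Set.mem_insert_of_mem _ rfl
    · rintro (rfl | rfl)
      · exact ⟨b 0, ⟨0, rfl⟩, rfl⟩
      · exact ⟨b 1, ⟨1, rfl⟩, rfl⟩

lemma indep_fst_ne_zero {a b : V3 F} (h : LinearIndependent F ![a, b]) : a ≠ 0 := by
  have := h.ne_zero 0
  simpa using this

lemma indep_snd_ne_zero {a b : V3 F} (h : LinearIndependent F ![a, b]) : b ≠ 0 := by
  have := h.ne_zero 1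
  simpa using this

lemma line_two_points (l : Ln F) : ∃ p q : Pt F, p ≠ q ∧ p.1 ≤ l.1 ∧ q.1 ≤ l.1 := by
  obtain ⟨a, b, hab, hl⟩ := line_basis l
  refine ⟨ptMk a (indep_fst_ne_zero hab), ptMk b (indep_snd_ne_zero hab),
    fun he => indep_span_ne hab (congrArg Subtype.val he), ?_, ?_⟩ <;>
  · rw [hl, ptMk]
    exact span_mono (by simp)

lemma param_inj {a b : V3 F} (hab : LinearIndependent F ![a, b]) {t t' : F}
    (h : span F {a + t • b} = span F {a + t' • b}) : t = t' := by
  obtain ⟨c, hc⟩ := mem_span_singleton.mp (h ▸ mem_span_singleton_self (a + t' • b))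
  obtain ⟨h1, h2⟩ := (LinearIndependent.pair_iff.mp hab) (c - 1) (c * t - t')
    (by have e : (c - 1) • a + (c * t - t') • b = c • (a + t • b) - (a + t' • b) := by
          module
        rw [e, hc, sub_self])
  rw [sub_eq_zero] at h1 h2
  rw [← h2, h1, one_mul]

lemma param_ne_snd {a b : V3 F} (hab : LinearIndependent F ![a, b]) (t : F) :
    span F {a + t • b} ≠ span F {b} := by
  intro h
  obtain ⟨c, hc⟩ := mem_span_singleton.mp (h.symm ▸ mem_span_singleton_self b)
  obtain ⟨h1, h2⟩ := (LinearIndependent.pair_iff.mp hab) (-c) (1 - c * t)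
    (by have e : (-c) • a + (1 - c * t) • b = b - c • (a + t • b) := by module
        rw [e, hc, sub_self])
  rw [neg_eq_zero] at h1
  rw [h1] at h2
  simp at h2

lemma param_ne_zero {a b : V3 F} (hab : LinearIndependent F ![a, b]) (t : F) :
    a + t • b ≠ 0 := by
  intro h
  obtain ⟨h1, h2⟩ := (LinearIndependent.pair_iff.mp hab) 1 t (by rw [one_smul]; exact h)
  simp at h1

lemma param_mem {a b : V3 F} (t : F) : a + t • b ∈ span F {a, b} :=
  mem_span_pair.mpr ⟨1, t, by rw [one_smul]⟩

lemma snd_mem {a b : V3 F} : b ∈ span F {a, b} := subset_span (by simp)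
lemma fst_mem {a b : V3 F} : a ∈ span F {a, b} := subset_span (by simp)

section Minors

lemma indep_of_minor01 {u w : V3 F} (h : u 0 * w 1 - u 1 * w 0 ≠ 0) :
    LinearIndependent F ![u, w] := by
  rw [LinearIndependent.pair_iff]
  intro s t hst
  have h0 := congrFun hst 0
  have h1 := congrFun hst 1
  simp only [Pi.add_apply, Pi.smul_apply, smul_eq_mul, Pi.zero_apply] at h0 h1
  constructor
  · have hs : s * (u 0 * w 1 - u 1 * w 0) = 0 := by linear_combination w 1 * h0 - w 0 * h1
    rcases mul_eq_zero.mp hs with h' | h'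
    · exact h'
    · exact absurd h' h
  · have ht : t * (u 0 * w 1 - u 1 * w 0) = 0 := by linear_combination u 0 * h1 - u 1 * h0
    rcases mul_eq_zero.mp ht with h' | h'
    · exact h'
    · exact absurd h' h

lemma indep_of_minor02 {u w : V3 F} (h : u 0 * w 2 - u 2 * w 0 ≠ 0) :
    LinearIndependent F ![u, w] := by
  rw [LinearIndependent.pair_iff]
  intro s t hst
  have h0 := congrFun hst 0
  have h1 := congrFun hst 2
  simp only [Pi.add_apply, Pi.smul_apply, smul_eq_mul, Pi.zero_apply] at h0 h1
  constructor
  · have hs : s * (u 0 * w 2 - u 2 * w 0) = 0 := by linear_combination w 2 * h0 - w 0 * h1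
    rcases mul_eq_zero.mp hs with h' | h'
    · exact h'
    · exact absurd h' h
  · have ht : t * (u 0 * w 2 - u 2 * w 0) = 0 := by linear_combination u 0 * h1 - u 2 * h0
    rcases mul_eq_zero.mp ht with h' | h'
    · exact h'
    · exact absurd h' h

lemma indep_of_minor12 {u w : V3 F} (h : u 1 * w 2 - u 2 * w 1 ≠ 0) :
    LinearIndependent F ![u, w] := by
  rw [LinearIndependent.pair_iff]
  intro s t hst
  have h0 := congrFun hst 1
  have h1 := congrFun hst 2
  simp only [Pi.add_apply, Pi.smul_apply, smul_eq_mul, Pi.zero_apply] at h0 h1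
  constructor
  · have hs : s * (u 1 * w 2 - u 2 * w 1) = 0 := by linear_combination w 2 * h0 - w 1 * h1
    rcases mul_eq_zero.mp hs with h' | h'
    · exact h'
    · exact absurd h' h
  · have ht : t * (u 1 * w 2 - u 2 * w 1) = 0 := by linear_combination u 1 * h1 - u 2 * h0
    rcases mul_eq_zero.mp ht with h' | h'
    · exact h'
    · exact absurd h' h

end Minors

lemma ptMk_ne {u w : V3 F} (h : LinearIndependent F ![u, w]) {hu hw} :
    ptMk u hu ≠ ptMk w hw :=
  fun he => indep_span_ne h (congrArg Subtype.val he)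

lemma join_ptMk {a b : V3 F} {ha hb} :
    (ptMk a ha).1 ⊔ (ptMk b hb).1 = span F {a, b} := by
  rw [ptMk, ptMk, ← span_union, Set.singleton_union]


lemma ne0 {v : V3 F} (i : Fin 3) (h : v i ≠ 0) : v ≠ 0 :=
  fun h0 => h (by rw [h0]; rfl)

lemma mem2 {u w x : V3 F} (m n : F) (h0 : m * u 0 + n * w 0 = x 0)
    (h1 : m * u 1 + n * w 1 = x 1) (h2 : m * u 2 + n * w 2 = x 2) :
    x ∈ span F {u, w} := by
  refine mem_span_pair.mpr ⟨m, n, ?_⟩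
  funext i
  fin_cases i <;>
    simp only [Pi.add_apply, Pi.smul_apply, smul_eq_mul] <;> assumption

lemma nmem2 {u w x : V3 F}
    (H : ∀ m n : F, m * u 0 + n * w 0 = x 0 → m * u 1 + n * w 1 = x 1 →
      m * u 2 + n * w 2 = x 2 → False) : x ∉ span F {u, w} := by
  intro hx
  obtain ⟨m, n, hmn⟩ := mem_span_pair.mp hx
  exact H m n (by simpa using congrFun hmn 0) (by simpa using congrFun hmn 1)
    (by simpa using congrFun hmn 2)

section Collineation

variable (g : Pt F → Pt F) (h : Ln F → Ln F)
variable (inc : ∀ (p : Pt F) (l : Ln F), (g p).1 ≤ (h l).1 ↔ p.1 ≤ l.1)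
include inc

lemma g_inj : Function.Injective g := by
  intro p q hpq
  refine point_eq_of_pencil (fun l => ?_)
  rw [← inc p l, ← inc q l, hpq]

lemma h_two_points {l : Ln F} {p p' : Pt F} (hne : p ≠ p')
    (hp : p.1 ≤ l.1) (hp' : p'.1 ≤ l.1) : (h l).1 = (g p).1 ⊔ (g p').1 :=
  line_eq_join (fun he => hne (g_inj g h inc he)) ((inc p l).mpr hp) ((inc p' l).mpr hp')

lemma fix_meet {p1 p2 p3 p4 X : Pt F}
    (f1 : g p1 = p1) (f2 : g p2 = p2) (f3 : g p3 = p3) (f4 : g p4 = p4)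
    (h12 : p1 ≠ p2) (h34 : p3 ≠ p4)
    (hjoin : p1.1 ⊔ p2.1 ≠ p3.1 ⊔ p4.1)
    (hX12 : X.1 ≤ p1.1 ⊔ p2.1) (hX34 : X.1 ≤ p3.1 ⊔ p4.1) : g X = X := by
  set l12 : Ln F := ⟨p1.1 ⊔ p2.1, join_rank2 h12⟩ with hl12
  set l34 : Ln F := ⟨p3.1 ⊔ p4.1, join_rank2 h34⟩ with hl34
  have hfix12 : h l12 = l12 := by
    apply Subtype.ext
    rw [h_two_points g h inc h12 (le_sup_left : p1.1 ≤ l12.1) (le_sup_right : p2.1 ≤ l12.1),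
      f1, f2]
  have hfix34 : h l34 = l34 := by
    apply Subtype.ext
    rw [h_two_points g h inc h34 (le_sup_left : p3.1 ≤ l34.1) (le_sup_right : p4.1 ≤ l34.1),
      f3, f4]
  have hll : l12 ≠ l34 := fun he => hjoin (congrArg Subtype.val he)
  have hg12 : (g X).1 ≤ l12.1 := by
    have := (inc X l12).mpr hX12
    rwa [hfix12] at this
  have hg34 : (g X).1 ≤ l34.1 := by
    have := (inc X l34).mpr hX34
    rwa [hfix34] at this
  exact point_unique hll hg12 hg34 hX12 hX34

end Collineation

section Closure

variable (g : Pt F → Pt F) (h : Ln F → Ln F)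

/-- `g` fixes the point spanned by `v`. -/
def Fix (v : V3 F) : Prop := ∀ hv : v ≠ 0, g (ptMk v hv) = ptMk v hv

variable (inc : ∀ (p : Pt F) (l : Ln F), (g p).1 ≤ (h l).1 ↔ p.1 ≤ l.1)
include inc

variable {g h}

lemma fix_meet' {u1 u2 u3 u4 x : V3 F} {h1 h2 h3 h4 : _}
    (f1 : g (ptMk u1 h1) = ptMk u1 h1) (f2 : g (ptMk u2 h2) = ptMk u2 h2)
    (f3 : g (ptMk u3 h3) = ptMk u3 h3) (f4 : g (ptMk u4 h4) = ptMk u4 h4)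
    (i12 : LinearIndependent F ![u1, u2]) (i34 : LinearIndependent F ![u3, u4])
    (hj : u1 ∉ span F {u3, u4})
    (hx : x ≠ 0) (hx12 : x ∈ span F {u1, u2}) (hx34 : x ∈ span F {u3, u4}) :
    g (ptMk x hx) = ptMk x hx := by
  refine fix_meet g h inc f1 f2 f3 f4 (ptMk_ne i12) (ptMk_ne i34) ?_ ?_ ?_
  · rw [join_ptMk, join_ptMk]
    exact fun he => hj (he ▸ (fst_mem (a := u1) (b := u2)))
  · rw [join_ptMk]
    exact (span_singleton_le_iff_mem _ _).mpr hx12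
  · rw [join_ptMk]
    exact (span_singleton_le_iff_mem _ _).mpr hx34


theorem quad_closure (hcast : ∀ x : F, ∃ n : ℕ, x = (n : F))
    (fA : Fix g ![1,0,0]) (fB : Fix g ![0,1,0]) (fC : Fix g ![0,0,1])
    (fD : Fix g ![1,1,1]) : ∀ p : Pt F, g p = p := by
  have hA : (![1,0,0] : V3 F) ≠ 0 := ne0 0 (by norm_num)
  have hB : (![0,1,0] : V3 F) ≠ 0 := ne0 1 (by norm_num)
  have hC : (![0,0,1] : V3 F) ≠ 0 := ne0 2 (by norm_num)
  have hD : (![1,1,1] : V3 F) ≠ 0 := ne0 0 (by norm_num)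
  -- the diagonal point E = (0,1,1)
  have fE : Fix g ![0,1,1] := by
    intro hv
    refine fix_meet' inc (fB hB) (fC hC) (fA hA) (fD hD)
      (indep_of_minor12 (by norm_num)) (indep_of_minor01 (by norm_num)) ?_ hv
      (mem2 1 1 (by norm_num) (by norm_num) (by norm_num))
      (mem2 (-1) 1 (by norm_num) (by norm_num) (by norm_num))
    refine nmem2 (fun m n e0 e1 e2 => ?_)
    simp at e0 e1 e2
    exact one_ne_zero (α := F) (by linear_combination e2 - e1)
  -- step 1 : (0,1,t) fixed → (1,1,t) fixed
  have step1 : ∀ t : F, Fix g ![0,1,t] → Fix g ![1,1,t] := by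
    intro t hf hv
    refine fix_meet' inc (fA hA) (hf (ne0 1 (by norm_num))) (fC hC) (fD hD)
      (indep_of_minor01 (by norm_num)) (indep_of_minor02 (by norm_num)) ?_ hv
      (mem2 1 1 (by norm_num) (by norm_num) (by norm_num))
      (mem2 (t - 1) 1 (by norm_num) (by norm_num) (by norm_num))
    refine nmem2 (fun m n e0 e1 e2 => ?_)
    simp at e0 e1 e2
    exact one_ne_zero (α := F) (by linear_combination e1 - e0)
  -- step 2 : (1,1,t) fixed → (1,0,t) fixed
  have step2 : ∀ t : F, Fix g ![1,1,t] → Fix g ![1,0,t] := by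
    intro t hf hv
    refine fix_meet' inc (fB hB) (hf (ne0 0 (by norm_num))) (fA hA) (fC hC)
      (indep_of_minor01 (by norm_num)) (indep_of_minor02 (by norm_num)) ?_ hv
      (mem2 (-1) 1 (by norm_num) (by norm_num) (by norm_num))
      (mem2 1 t (by norm_num) (by norm_num) (by norm_num))
    refine nmem2 (fun m n e0 e1 e2 => ?_)
    simp at e0 e1 e2
  -- step 4 : (1,0,t) fixed → (1,1,t+1) fixed
  have step4 : ∀ t : F, Fix g ![1,0,t] → Fix g ![1,1,t+1] := by
    intro t hf hv
    refine fix_meet' inc (hf (ne0 0 (by norm_num))) (fE (ne0 1 (by norm_num)))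
      (fC hC) (fD hD)
      (indep_of_minor01 (by norm_num)) (indep_of_minor02 (by norm_num)) ?_ hv
      (mem2 1 1 (by norm_num) (by norm_num) (by norm_num))
      (mem2 t 1 (by norm_num) (by norm_num) (by norm_num))
    refine nmem2 (fun m n e0 e1 e2 => ?_)
    simp at e0 e1 e2
    exact one_ne_zero (α := F) (by linear_combination e1 - e0)
  -- step 5 : (1,1,t) fixed → (0,1,t) fixed
  have step5 : ∀ t : F, Fix g ![1,1,t] → Fix g ![0,1,t] := by
    intro t hf hv
    refine fix_meet' inc (fA hA) (hf (ne0 0 (by norm_num))) (fB hB) (fC hC)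
      (indep_of_minor01 (by norm_num)) (indep_of_minor12 (by norm_num)) ?_ hv
      (mem2 (-1) 1 (by norm_num) (by norm_num) (by norm_num))
      (mem2 1 t (by norm_num) (by norm_num) (by norm_num))
    refine nmem2 (fun m n e0 e1 e2 => ?_)
    simp at e0 e1 e2
  -- the family (0,1,t)
  have famB : ∀ t : F, Fix g ![0,1,t] := by
    have hnat : ∀ n : ℕ, Fix g ![0,1,(n : F)] := by
      intro n
      induction n with
      | zero =>
        have hvec : (![0,1,((0:ℕ) : F)] : V3 F) = ![0,1,0] := by norm_num
        rw [hvec]; exact fB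
      | succ n ih =>
        have h11 := step1 _ ih
        have h10 := step2 _ h11
        have h11' := step4 _ h10
        have h01 := step5 _ h11'
        have hvec : (![0,1,((n+1:ℕ) : F)] : V3 F) = ![0,1,(n:F)+1] := by push_cast; rfl
        rw [hvec]; exact h01
    intro t
    obtain ⟨n, rfl⟩ := hcast t
    exact hnat n
  have fam11 : ∀ t : F, Fix g ![1,1,t] := fun t => step1 t (famB t)
  have fam10 : ∀ t : F, Fix g ![1,0,t] := fun t => step2 t (fam11 t)
  -- step 7 : (1,b,0) fixed for b ≠ 0
  have fam1b0 : ∀ b : F, b ≠ 0 → Fix g ![1,b,0] := by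
    intro b hb hv
    refine fix_meet' inc (fam10 1 (ne0 0 (by norm_num))) (famB (-b⁻¹) (ne0 1 (by norm_num)))
      (fA hA) (fB hB)
      (indep_of_minor01 (by norm_num)) (indep_of_minor01 (by norm_num)) ?_ hv
      (mem2 1 b (by norm_num) (by norm_num) (by simp only [vec3_two]; rw [mul_neg, mul_inv_cancel₀ hb]; ring))
      (mem2 1 b (by norm_num) (by norm_num) (by norm_num))
    refine nmem2 (fun m n e0 e1 e2 => ?_)
    simp at e0 e1 e2
  -- step 6 : (1,b,c) fixed for b ≠ 0
  have fam1bc : ∀ b c : F, b ≠ 0 → Fix g ![1,b,c] := by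
    intro b c hb hv
    refine fix_meet' inc (fB hB) (fam10 c (ne0 0 (by norm_num)))
      (fC hC) (fam1b0 b hb (ne0 0 (by norm_num)))
      (indep_of_minor01 (by norm_num)) (indep_of_minor02 (by norm_num)) ?_ hv
      (mem2 b 1 (by norm_num) (by norm_num) (by norm_num))
      (mem2 c 1 (by norm_num) (by norm_num) (by norm_num))
    refine nmem2 (fun m n e0 e1 e2 => ?_)
    simp at e0 e1 e2
    exact one_ne_zero (α := F) (by linear_combination b * e0 - e1)
  -- every point is fixed
  have ptMk_congr : ∀ (u w : V3 F) (hu : u ≠ 0) (hw : w ≠ 0) (c : F), c ≠ 0 → u = c • w →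
      ptMk u hu = ptMk w hw := by
    intro u w hu hw c hc he
    apply Subtype.ext
    show span F {u} = span F {w}
    rw [he]
    exact span_singleton_smul_eq (IsUnit.mk0 _ hc) _
  intro p
  obtain ⟨v, hv0, hvsp⟩ := pt_rep p
  have hp : p = ptMk v hv0 := Subtype.ext hvsp
  rw [hp]
  by_cases h0 : v 0 = 0
  · by_cases h1 : v 1 = 0
    · have h2 : v 2 ≠ 0 := by
        intro h2
        apply hv0
        funext i
        fin_cases i <;> assumption
      rw [ptMk_congr v ![0,0,1] hv0 hC (v 2) h2
        (by funext i; fin_cases i <;> simp [h0, h1])]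
      exact fC hC
    · rw [ptMk_congr v ![0,1,v 2 / v 1] hv0 (ne0 1 (by norm_num)) (v 1) h1
        (by funext i; fin_cases i <;> simp [h0] <;> field_simp)]
      exact famB _ _
  · by_cases h1 : v 1 = 0
    · rw [ptMk_congr v ![1,0,v 2 / v 0] hv0 (ne0 0 (by norm_num)) (v 0) h0
        (by funext i; fin_cases i <;> simp [h1] <;> field_simp)]
      exact fam10 _ _
    · rw [ptMk_congr v ![1,v 1 / v 0,v 2 / v 0] hv0 (ne0 0 (by norm_num)) (v 0) h0
        (by funext i; fin_cases i <;> simp <;> field_simp)]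
      exact fam1bc _ _ (div_ne_zero h1 h0) _

end Closure


section Counting

lemma six_points (q : ℕ) [CharP F q] (hq5 : 5 ≤ q) (l : Ln F) :
    ∃ f : Fin 6 → Pt F, Function.Injective f ∧ ∀ k, (f k).1 ≤ l.1 := by
  obtain ⟨a, b, hab, hl⟩ := line_basis l
  refine ⟨fun k => if hk : (k : ℕ) < 5 then ptMk (a + ((k : ℕ) : F) • b) (param_ne_zero hab _)
    else ptMk b (indep_snd_ne_zero hab), ?_, ?_⟩
  · intro k k' he
    dsimp only at he
    by_cases hk : (k : ℕ) < 5 <;> by_cases hk' : (k' : ℕ) < 5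
    · rw [dif_pos hk, dif_pos hk'] at he
      have := param_inj hab (congrArg Subtype.val he)
      have := CharP.natCast_injOn_Iio F q (by exact lt_of_lt_of_le hk hq5)
        (by exact lt_of_lt_of_le hk' hq5) this
      exact Fin.ext (by omega)
    · rw [dif_pos hk, dif_neg hk'] at he
      exact absurd (congrArg Subtype.val he) (param_ne_snd hab _)
    · rw [dif_neg hk, dif_pos hk'] at he
      exact absurd (congrArg Subtype.val he).symm (param_ne_snd hab _)
    · exact Fin.ext (by omega)
  · intro k
    dsimp only
    by_cases hk : (k : ℕ) < 5
    · rw [dif_pos hk, hl]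
      exact (span_singleton_le_iff_mem _ _).mpr (param_mem _)
    · rw [dif_neg hk, hl]
      exact (span_singleton_le_iff_mem _ _).mpr snd_mem

lemma three_not_S (q : ℕ) [CharP F q] (hq5 : 5 ≤ q) (l L1 L2 : Ln F) (hl1 : l ≠ L1) (hl2 : l ≠ L2) (Dp : Pt F)
    (S : Set (Pt F))
    (hS : ∀ p, p ∈ S → p.1 ≤ l.1 → (p.1 ≤ L1.1 ∨ p.1 ≤ L2.1 ∨ p = Dp)) :
    ∃ x y z : Pt F, x ≠ y ∧ x ≠ z ∧ y ≠ z ∧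
      (x.1 ≤ l.1 ∧ x ∉ S) ∧ (y.1 ≤ l.1 ∧ y ∉ S) ∧ (z.1 ≤ l.1 ∧ z ∉ S) := by
  classical
  obtain ⟨f, hfinj, hfle⟩ := six_points q hq5 l
  set T : Finset (Pt F) := Finset.image f Finset.univ with hT
  have hTcard : T.card = 6 := by
    rw [hT, Finset.card_image_of_injective _ hfinj, Finset.card_univ, Fintype.card_fin]
  have hTle : ∀ a ∈ T, a.1 ≤ l.1 := by
    intro a ha
    obtain ⟨k, _, rfl⟩ := Finset.mem_image.mp ha
    exact hfle k
  set bad : Finset (Pt F) := T.filter (fun p => p ∈ S) with hbad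
  set good : Finset (Pt F) := T.filter (fun p => p ∉ S) with hgood
  have hbadcard : bad.card ≤ 3 := by
    have : ∀ a ∈ bad, (if a.1 ≤ L1.1 then (0 : Fin 3) else if a.1 ≤ L2.1 then 1 else 2)
        ∈ (Finset.univ : Finset (Fin 3)) := fun a _ => Finset.mem_univ _
    have hinj : ∀ a ∈ bad, ∀ b ∈ bad,
        (if a.1 ≤ L1.1 then (0 : Fin 3) else if a.1 ≤ L2.1 then 1 else 2) =
        (if b.1 ≤ L1.1 then (0 : Fin 3) else if b.1 ≤ L2.1 then 1 else 2) → a = b := by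
      intro a ha b hb he
      obtain ⟨haT, haS⟩ := Finset.mem_filter.mp ha
      obtain ⟨hbT, hbS⟩ := Finset.mem_filter.mp hb
      by_cases ha1 : a.1 ≤ L1.1 <;> by_cases hb1 : b.1 ≤ L1.1 <;>
        simp only [if_pos, if_neg, ha1, hb1, if_true, if_false] at he
      · exact point_unique hl1 (hTle a haT) ha1 (hTle b hbT) hb1
      · by_cases hb2 : b.1 ≤ L2.1 <;> simp [hb2] at he
      · by_cases ha2 : a.1 ≤ L2.1 <;> simp [ha2] at he
      · by_cases ha2 : a.1 ≤ L2.1 <;> by_cases hb2 : b.1 ≤ L2.1 <;>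
          simp only [ha2, hb2, if_true, if_false] at he
        · exact point_unique hl2 (hTle a haT) ha2 (hTle b hbT) hb2
        · exact absurd he (by decide)
        · exact absurd he (by decide)
        · rcases hS a haS (hTle a haT) with h | h | h
          · exact absurd h ha1
          · exact absurd h ha2
          · rcases hS b hbS (hTle b hbT) with h' | h' | h'
            · exact absurd h' hb1
            · exact absurd h' hb2
            · rw [h, h']
    calc bad.card ≤ (Finset.univ : Finset (Fin 3)).card :=
          Finset.card_le_card_of_injOn _ this hinj
      _ = 3 := by simp
  have hsum : bad.card + good.card = T.card := by
    rw [hbad, hgood]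
    exact Finset.card_filter_add_card_filter_not _
  have hgoodcard : 3 ≤ good.card := by omega
  obtain ⟨u, huss, hucard⟩ := Finset.exists_subset_card_eq hgoodcard
  obtain ⟨x, y, z, hxy, hxz, hyz, hu⟩ := Finset.card_eq_three.mp hucard
  have hx := huss (hu ▸ (by simp : x ∈ ({x, y, z} : Finset (Pt F))))
  have hy := huss (hu ▸ (by simp : y ∈ ({x, y, z} : Finset (Pt F))))
  have hz := huss (hu ▸ (by simp : z ∈ ({x, y, z} : Finset (Pt F))))
  obtain ⟨hxT, hxS⟩ := Finset.mem_filter.mp hx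
  obtain ⟨hyT, hyS⟩ := Finset.mem_filter.mp hy
  obtain ⟨hzT, hzS⟩ := Finset.mem_filter.mp hz
  exact ⟨x, y, z, hxy, hxz, hyz, ⟨hTle x hxT, hxS⟩, ⟨hTle y hyT, hyS⟩, ⟨hTle z hzT, hzS⟩⟩

end Counting


section Config

variable (F)

def ptA : Pt F := ptMk ![1,0,0] (ne0 0 one_ne_zero)
def ptQ0 : Pt F := ptMk ![0,1,0] (ne0 1 one_ne_zero)
def ptP0 : Pt F := ptMk ![1,0,1] (ne0 0 one_ne_zero)
def ptP1 : Pt F := ptMk ![0,0,1] (ne0 2 one_ne_zero)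
def ptD : Pt F := ptMk ![1,1,1] (ne0 0 one_ne_zero)

lemma hAQ0 : ptA F ≠ ptQ0 F := ptMk_ne (indep_of_minor01 (by norm_num))
lemma hAP1 : ptA F ≠ ptP1 F := ptMk_ne (indep_of_minor02 (by norm_num))
lemma hQ0D : ptQ0 F ≠ ptD F := ptMk_ne (indep_of_minor01 (by norm_num))
lemma hP0P1 : ptP0 F ≠ ptP1 F := ptMk_ne (indep_of_minor02 (by norm_num))
lemma hQ0P0 : ptQ0 F ≠ ptP0 F := ptMk_ne (indep_of_minor01 (by norm_num))
lemma hQ0P1 : ptQ0 F ≠ ptP1 F := ptMk_ne (indep_of_minor12 (by norm_num))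

def lnL1 : Ln F := lineMk (ptA F) (ptQ0 F) (hAQ0 F)
def lnL2 : Ln F := lineMk (ptA F) (ptP1 F) (hAP1 F)
def lnM : Ln F := lineMk (ptQ0 F) (ptD F) (hQ0D F)

lemma L1_val : (lnL1 F).1 = span F {![1,0,0], ![0,1,0]} := join_ptMk
lemma L2_val : (lnL2 F).1 = span F {![1,0,0], ![0,0,1]} := join_ptMk
lemma M_val : (lnM F).1 = span F {![0,1,0], ![1,1,1]} := join_ptMk

/-- The rigid set of points. -/
def Spts : Set (Pt F) :=
  {p | (p.1 ≤ (lnL1 F).1 ∧ p ≠ ptQ0 F) ∨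
    (p.1 ≤ (lnL2 F).1 ∧ p ≠ ptP0 F ∧ p ≠ ptP1 F) ∨ p = ptD F}

lemma ptMk_le_iff {v : V3 F} {hv : v ≠ 0} {W : Submodule F (V3 F)} :
    (ptMk v hv).1 ≤ W ↔ v ∈ W := span_singleton_le_iff_mem _ _

lemma Q0_not_le_L2 : ¬ (ptQ0 F).1 ≤ (lnL2 F).1 := by
  rw [L2_val, ptQ0, ptMk_le_iff]
  refine nmem2 (fun m n e0 e1 e2 => ?_)
  simp at e0 e1 e2

lemma P0_not_le_L1 : ¬ (ptP0 F).1 ≤ (lnL1 F).1 := by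
  rw [L1_val, ptP0, ptMk_le_iff]
  refine nmem2 (fun m n e0 e1 e2 => ?_)
  simp at e0 e1 e2

lemma P1_not_le_L1 : ¬ (ptP1 F).1 ≤ (lnL1 F).1 := by
  rw [L1_val, ptP1, ptMk_le_iff]
  refine nmem2 (fun m n e0 e1 e2 => ?_)
  simp at e0 e1 e2

lemma D_not_le_L1 : ¬ (ptD F).1 ≤ (lnL1 F).1 := by
  rw [L1_val, ptD, ptMk_le_iff]
  refine nmem2 (fun m n e0 e1 e2 => ?_)
  simp at e0 e1 e2

lemma D_not_le_L2 : ¬ (ptD F).1 ≤ (lnL2 F).1 := by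
  rw [L2_val, ptD, ptMk_le_iff]
  refine nmem2 (fun m n e0 e1 e2 => ?_)
  simp at e0 e1 e2

lemma Q0_notin_S : ptQ0 F ∉ Spts F := by
  rintro ((⟨-, hne⟩) | (⟨hle, -⟩) | heq)
  · exact hne rfl
  · exact Q0_not_le_L2 F hle
  · exact hQ0D F heq

lemma P0_notin_S : ptP0 F ∉ Spts F := by
  rintro ((⟨hle, -⟩) | (⟨-, hne, -⟩) | heq)
  · exact P0_not_le_L1 F hle
  · exact hne rfl
  · exact (ptMk_ne (indep_of_minor12 (by norm_num)) : ptP0 F ≠ ptD F) heq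

lemma P1_notin_S : ptP1 F ∉ Spts F := by
  rintro ((⟨hle, -⟩) | (⟨-, -, hne⟩) | heq)
  · exact P1_not_le_L1 F hle
  · exact hne rfl
  · exact (ptMk_ne (indep_of_minor02 (by norm_num)) : ptD F ≠ ptP1 F) heq.symm

lemma L1_ne_L2 : lnL1 F ≠ lnL2 F := by
  intro he
  exact P1_not_le_L1 F (he ▸ (le_sup_right : (ptP1 F).1 ≤ (lnL2 F).1))

lemma M_ne_L2 : lnM F ≠ lnL2 F := by
  intro he
  exact Q0_not_le_L2 F (he ▸ (le_sup_left : (ptQ0 F).1 ≤ (lnM F).1))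

lemma A_le_L1 : (ptA F).1 ≤ (lnL1 F).1 := le_sup_left
lemma Q0_le_L1 : (ptQ0 F).1 ≤ (lnL1 F).1 := le_sup_right
lemma A_le_L2 : (ptA F).1 ≤ (lnL2 F).1 := le_sup_left
lemma P1_le_L2 : (ptP1 F).1 ≤ (lnL2 F).1 := le_sup_right

lemma P0_le_L2 : (ptP0 F).1 ≤ (lnL2 F).1 := by
  rw [L2_val, ptP0, ptMk_le_iff]
  exact mem2 1 1 (by norm_num) (by norm_num) (by norm_num)

lemma P0_le_M : (ptP0 F).1 ≤ (lnM F).1 := by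
  rw [M_val, ptP0, ptMk_le_iff]
  exact mem2 (-1) 1 (by norm_num) (by norm_num) (by norm_num)

lemma NL1_sub : ∀ p : Pt F, p.1 ≤ (lnL1 F).1 → p ∉ Spts F → p = ptQ0 F := by
  intro p hle hnS
  by_contra hne
  exact hnS (Or.inl ⟨hle, hne⟩)

lemma NL2_sub : ∀ p : Pt F, p.1 ≤ (lnL2 F).1 → p ∉ Spts F → p = ptP0 F ∨ p = ptP1 F := by
  intro p hle hnS
  by_contra hne
  push_neg at hne
  exact hnS (Or.inr (Or.inl ⟨hle, hne.1, hne.2⟩))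

lemma S_cases : ∀ p : Pt F, p ∈ Spts F →
    p.1 ≤ (lnL1 F).1 ∨ p.1 ≤ (lnL2 F).1 ∨ p = ptD F := by
  rintro p ((⟨hle, -⟩) | (⟨hle, -⟩) | heq)
  · exact Or.inl hle
  · exact Or.inr (Or.inl hle)
  · exact Or.inr (Or.inr heq)

lemma D_in_S : ptD F ∈ Spts F := Or.inr (Or.inr rfl)

end Config

section Rigid

variable (q : ℕ) [CharP F q] (hq5 : 5 ≤ q)
variable (hcast : ∀ x : F, ∃ n : ℕ, x = (n : F))
variable (g g' : Pt F → Pt F) (h : Ln F → Ln F)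
variable (inc : ∀ (p : Pt F) (l : Ln F), (g p).1 ≤ (h l).1 ↔ p.1 ≤ l.1)
variable (hg'g : ∀ p, g' (g p) = p) (hgg' : ∀ p, g (g' p) = p)
variable (hS : ∀ p, p ∈ Spts F ↔ g p ∈ Spts F)

include hq5 hcast inc hg'g hgg' hS

theorem S_rigid : (∀ p, g p = p) ∧ (∀ l, h l = l) := by
  have ginj : Function.Injective g := g_inj g h inc
  -- membership transfer for non-S points on a line
  have memN : ∀ (p : Pt F) (l : Ln F), p.1 ≤ (h l).1 → p ∉ Spts F →
      (g' p).1 ≤ l.1 ∧ g' p ∉ Spts F ∧ g (g' p) = p := by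
    intro p l hle hnS
    refine ⟨?_, ?_, hgg' p⟩
    · rw [← inc (g' p) l, hgg' p]
      exact hle
    · intro hmem
      exact hnS ((hgg' p) ▸ ((hS (g' p)).mp hmem))
  -- h L1 = L1
  have hL1 : h (lnL1 F) = lnL1 F := by
    by_contra hne
    by_cases h2 : h (lnL1 F) = lnL2 F
    · have c0 := memN (ptP0 F) (lnL1 F) (h2 ▸ P0_le_L2 F) (P0_notin_S F)
      have c1 := memN (ptP1 F) (lnL1 F) (h2 ▸ P1_le_L2 F) (P1_notin_S F)
      have e0 := NL1_sub F _ c0.1 c0.2.1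
      have e1 := NL1_sub F _ c1.1 c1.2.1
      exact hP0P1 F (by rw [← c0.2.2, ← c1.2.2, e0, e1])
    · obtain ⟨x, y, z, hxy, hxz, hyz, ⟨hx1, hx2⟩, ⟨hy1, hy2⟩, ⟨hz1, hz2⟩⟩ :=
        three_not_S q hq5 (h (lnL1 F)) (lnL1 F) (lnL2 F) hne h2 (ptD F) (Spts F)
          (fun p hp _ => S_cases F p hp)
      have cx := memN x (lnL1 F) hx1 hx2
      have cy := memN y (lnL1 F) hy1 hy2
      have ex := NL1_sub F _ cx.1 cx.2.1
      have ey := NL1_sub F _ cy.1 cy.2.1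
      exact hxy (by rw [← cx.2.2, ← cy.2.2, ex, ey])
  -- h L2 = L2
  have hL2 : h (lnL2 F) = lnL2 F := by
    by_contra hne
    by_cases h2 : h (lnL2 F) = lnL1 F
    · have c0 := memN (ptQ0 F) (lnL2 F) (h2 ▸ Q0_le_L1 F) (Q0_notin_S F)
      rcases NL2_sub F _ c0.1 c0.2.1 with e | e
      · -- g' Q0 = P0 : then g P0 = Q0, but also need a second point; use direct approach
        have hgP0 : g (ptP0 F) = ptQ0 F := by rw [← e, c0.2.2]
        -- P1 also lands in N L1 = {Q0}
        have hP1le : (g (ptP1 F)).1 ≤ (lnL1 F).1 := by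
          rw [← h2, inc]
          exact P1_le_L2 F
        have hP1nS : g (ptP1 F) ∉ Spts F := fun hm => P1_notin_S F ((hS _).mpr hm)
        have := NL1_sub F _ hP1le hP1nS
        exact hP0P1 F (ginj (by rw [hgP0, this]))
      · have hgP1 : g (ptP1 F) = ptQ0 F := by rw [← e, c0.2.2]
        have hP0le : (g (ptP0 F)).1 ≤ (lnL1 F).1 := by
          rw [← h2, inc]
          exact P0_le_L2 F
        have hP0nS : g (ptP0 F) ∉ Spts F := fun hm => P0_notin_S F ((hS _).mpr hm)
        have := NL1_sub F _ hP0le hP0nS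
        exact hP0P1 F (ginj (by rw [hgP1, this]))
    · obtain ⟨x, y, z, hxy, hxz, hyz, ⟨hx1, hx2⟩, ⟨hy1, hy2⟩, ⟨hz1, hz2⟩⟩ :=
        three_not_S q hq5 (h (lnL2 F)) (lnL1 F) (lnL2 F) h2 hne (ptD F) (Spts F)
          (fun p hp _ => S_cases F p hp)
      have cx := memN x (lnL2 F) hx1 hx2
      have cy := memN y (lnL2 F) hy1 hy2
      have cz := memN z (lnL2 F) hz1 hz2
      have hx' : x = g (ptP0 F) ∨ x = g (ptP1 F) := by
        rcases NL2_sub F _ cx.1 cx.2.1 with e | e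
        · left; rw [← cx.2.2, e]
        · right; rw [← cx.2.2, e]
      have hy' : y = g (ptP0 F) ∨ y = g (ptP1 F) := by
        rcases NL2_sub F _ cy.1 cy.2.1 with e | e
        · left; rw [← cy.2.2, e]
        · right; rw [← cy.2.2, e]
      have hz' : z = g (ptP0 F) ∨ z = g (ptP1 F) := by
        rcases NL2_sub F _ cz.1 cz.2.1 with e | e
        · left; rw [← cz.2.2, e]
        · right; rw [← cz.2.2, e]
      rcases hx' with hx' | hx' <;> rcases hy' with hy' | hy' <;>
        rcases hz' with hz' | hz' <;>
      first
        | exact hxy (hx'.trans hy'.symm)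
        | exact hxz (hx'.trans hz'.symm)
        | exact hyz (hy'.trans hz'.symm)
  -- g fixes Q0
  have fQ0 : g (ptQ0 F) = ptQ0 F := by
    have h1 : (g (ptQ0 F)).1 ≤ (lnL1 F).1 := by
      rw [← hL1, inc]
      exact Q0_le_L1 F
    have h2 : g (ptQ0 F) ∉ Spts F := fun hm => Q0_notin_S F ((hS _).mpr hm)
    exact NL1_sub F _ h1 h2
  -- g fixes A
  have fA : g (ptA F) = ptA F := by
    have h1 : (g (ptA F)).1 ≤ (lnL1 F).1 := by rw [← hL1, inc]; exact A_le_L1 F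
    have h2 : (g (ptA F)).1 ≤ (lnL2 F).1 := by rw [← hL2, inc]; exact A_le_L2 F
    exact point_unique (L1_ne_L2 F) h1 h2 (A_le_L1 F) (A_le_L2 F)
  -- g fixes D
  have fD : g (ptD F) = ptD F := by
    have h1 : g (ptD F) ∈ Spts F := (hS _).mp (D_in_S F)
    have h2 : ¬ (g (ptD F)).1 ≤ (lnL1 F).1 := by
      rw [← hL1, inc]
      exact D_not_le_L1 F
    have h3 : ¬ (g (ptD F)).1 ≤ (lnL2 F).1 := by
      rw [← hL2, inc]
      exact D_not_le_L2 F
    rcases S_cases F _ h1 with hc | hc | hc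
    · exact absurd hc h2
    · exact absurd hc h3
    · exact hc
  -- h fixes M
  have hM : h (lnM F) = lnM F := by
    apply Subtype.ext
    rw [h_two_points g h inc (hQ0D F) (le_sup_left : (ptQ0 F).1 ≤ (lnM F).1)
      (le_sup_right : (ptD F).1 ≤ (lnM F).1), fQ0, fD]
    rfl
  -- g fixes P0
  have fP0 : g (ptP0 F) = ptP0 F := by
    have h1 : (g (ptP0 F)).1 ≤ (lnM F).1 := by rw [← hM, inc]; exact P0_le_M F
    have h2 : (g (ptP0 F)).1 ≤ (lnL2 F).1 := by rw [← hL2, inc]; exact P0_le_L2 F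
    exact point_unique (M_ne_L2 F) h1 h2 (P0_le_M F) (P0_le_L2 F)
  -- g fixes P1
  have fP1 : g (ptP1 F) = ptP1 F := by
    have h1 : (g (ptP1 F)).1 ≤ (lnL2 F).1 := by rw [← hL2, inc]; exact P1_le_L2 F
    have h2 : g (ptP1 F) ∉ Spts F := fun hm => P1_notin_S F ((hS _).mpr hm)
    rcases NL2_sub F _ h1 h2 with e | e
    · exact absurd (ginj (e.trans fP0.symm)) (fun hh => hP0P1 F hh.symm)
    · exact e
  -- conclude with the closure theorem
  have hgall : ∀ p, g p = p :=
    quad_closure (g := g) (h := h) (inc := inc) hcast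
      (fun _ => fA) (fun _ => fQ0) (fun _ => fP1) (fun _ => fD)
  refine ⟨hgall, fun l => ?_⟩
  obtain ⟨p, p', hne, hp, hp'⟩ := line_two_points l
  apply Subtype.ext
  rw [h_two_points g h inc hne hp hp', hgall p, hgall p']
  exact (line_eq_join hne hp hp').symm

end Rigid


section Graph

variable (F) (r s : ℕ)

lemma not_adj_inl_inl (x y : Pt F × Fin r) :
    ¬ (LeviTensor F r s).Adj (Sum.inl x) (Sum.inl y) := fun h => h

lemma not_adj_inr_inr (x y : Ln F × Fin s) :
    ¬ (LeviTensor F r s).Adj (Sum.inr x) (Sum.inr y) := fun h => h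

lemma adj_inl_inr (x : Pt F × Fin r) (y : Ln F × Fin s) :
    (LeviTensor F r s).Adj (Sum.inl x) (Sum.inr y) ↔ x.1.1 ≤ y.1.1 := Iff.rfl

lemma adj_inr_inl (x : Pt F × Fin r) (y : Ln F × Fin s) :
    (LeviTensor F r s).Adj (Sum.inr y) (Sum.inl x) ↔ x.1.1 ≤ y.1.1 := Iff.rfl

end Graph

section Upper

open scoped Classical

variable (F) (r s : ℕ)

noncomputable def upColor :
    ((SubspaceDim F 1 × Fin r) ⊕ (SubspaceDim F 2 × Fin s)) → Fin (r+s+1) :=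
  Sum.elim
    (fun pi => if pi.1 ∈ Spts F ∧ pi.2.val = 0 then ⟨r+s, by omega⟩ else
      ⟨pi.2.val, by have := pi.2.isLt; omega⟩)
    (fun lj => ⟨r + lj.2.val, by have := lj.2.isLt; omega⟩)

noncomputable def upColoring : (LeviTensor F r s).Coloring (Fin (r+s+1)) :=
  SimpleGraph.Coloring.mk (upColor F r s) (by
    rintro (⟨p,i⟩ | ⟨l,j⟩) (⟨p',i'⟩ | ⟨l',j'⟩) hadj
    · exact absurd hadj (not_adj_inl_inl F r s _ _)
    · simp only [upColor, Sum.elim_inl, Sum.elim_inr]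
      intro he
      have hv := congrArg Fin.val he
      have := i.isLt
      have := j'.isLt
      split_ifs at hv <;> simp at hv <;> omega
    · simp only [upColor, Sum.elim_inl, Sum.elim_inr]
      intro he
      have hv := congrArg Fin.val he
      have := i'.isLt
      have := j.isLt
      split_ifs at hv <;> simp at hv <;> omega
    · exact absurd hadj (not_adj_inr_inr F r s _ _))

theorem upper_dist (q : ℕ) [CharP F q] (hq5 : 5 ≤ q)
    (hcast : ∀ x : F, ∃ n : ℕ, x = (n : F)) (hr : 0 < r) (hs : 0 < s) :
    IsDistinguishing (LeviTensor F r s) (upColoring F r s) := by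
  intro σ hauto hcol
  set i0 : Fin r := ⟨0, hr⟩ with hi0
  set j0 : Fin s := ⟨0, hs⟩ with hj0
  have hcol' : ∀ v, upColor F r s (σ v) = upColor F r s v := hcol
  have hcolInv : ∀ v, upColor F r s (σ⁻¹ v) = upColor F r s v := by
    intro v
    have := hcol' (σ⁻¹ v)
    rw [show σ (σ⁻¹ v) = v from σ.apply_symm_apply v] at this
    exact this.symm
  have hpt : ∀ (τ : Equiv.Perm ((SubspaceDim F 1 × Fin r) ⊕ (SubspaceDim F 2 × Fin s)))
      (_ : ∀ v, upColor F r s (τ v) = upColor F r s v) (p : Pt F) (i : Fin r),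
      ∃ p' : Pt F, τ (Sum.inl (p, i)) = Sum.inl (p', i) ∧
        (i.val = 0 → (p ∈ Spts F ↔ p' ∈ Spts F)) := by
    intro τ hc p i
    have hv := hc (Sum.inl (p, i))
    rcases hτ : τ (Sum.inl (p, i)) with ⟨p', i'⟩ | ⟨l', j'⟩
    · rw [hτ] at hv
      simp only [upColor, Sum.elim_inl] at hv
      have hii := i.isLt
      have hii' := i'.isLt
      by_cases h1 : p' ∈ Spts F ∧ i'.val = 0 <;> by_cases h2 : p ∈ Spts F ∧ i.val = 0
      · rw [if_pos h1, if_pos h2] at hv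
        have hie : i' = i := Fin.ext (by omega)
        subst hie
        exact ⟨p', rfl, fun _ => iff_of_true h2.1 h1.1⟩
      · rw [if_pos h1, if_neg h2] at hv
        have := congrArg Fin.val hv
        simp at this
        omega
      · rw [if_neg h1, if_pos h2] at hv
        have := congrArg Fin.val hv
        simp at this
        omega
      · rw [if_neg h1, if_neg h2] at hv
        have hval := congrArg Fin.val hv
        simp at hval
        have hie : i' = i := Fin.ext hval
        subst hie
        exact ⟨p', rfl, fun hi => iff_of_false (fun hp => h2 ⟨hp, hi⟩)
          (fun hp' => h1 ⟨hp', hi⟩)⟩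
    · rw [hτ] at hv
      exfalso
      simp only [upColor, Sum.elim_inl, Sum.elim_inr] at hv
      have hval := congrArg Fin.val hv
      have := i.isLt
      have := j'.isLt
      split_ifs at hval <;> simp at hval <;> omega
  have hln : ∀ (τ : Equiv.Perm ((SubspaceDim F 1 × Fin r) ⊕ (SubspaceDim F 2 × Fin s)))
      (_ : ∀ v, upColor F r s (τ v) = upColor F r s v) (l : Ln F) (j : Fin s),
      ∃ l' : Ln F, τ (Sum.inr (l, j)) = Sum.inr (l', j) := by
    intro τ hc l j
    have hv := hc (Sum.inr (l, j))
    rcases hτ : τ (Sum.inr (l, j)) with ⟨p', i'⟩ | ⟨l', j'⟩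
    · rw [hτ] at hv
      exfalso
      simp only [upColor, Sum.elim_inl, Sum.elim_inr] at hv
      have hval := congrArg Fin.val hv
      have := i'.isLt
      have := j.isLt
      split_ifs at hval <;> simp at hval <;> omega
    · rw [hτ] at hv
      simp only [upColor, Sum.elim_inr] at hv
      have hval := congrArg Fin.val hv
      simp at hval
      have hje : j' = j := Fin.ext hval
      subst hje
      exact ⟨l', rfl⟩
  choose pmap hpmap hpS using hpt σ hcol
  choose pmap' hpmap' hpS' using hpt σ⁻¹ hcolInv
  choose lmap hlmap using hln σ hcol
  choose lmap' hlmap' using hln σ⁻¹ hcolInv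
  have hg'g : ∀ p, pmap' (pmap p i0) i0 = p := by
    intro p
    have h1 : σ⁻¹ (σ (Sum.inl (p, i0))) = Sum.inl (p, i0) := σ.symm_apply_apply _
    rw [hpmap p i0, hpmap' (pmap p i0) i0] at h1
    simpa using h1
  have hgg' : ∀ p, pmap (pmap' p i0) i0 = p := by
    intro p
    have h1 : σ (σ⁻¹ (Sum.inl (p, i0))) = Sum.inl (p, i0) := σ.apply_symm_apply _
    rw [hpmap' p i0, hpmap (pmap' p i0) i0] at h1
    simpa using h1
  have inc : ∀ (p : Pt F) (l : Ln F), (pmap p i0).1 ≤ (lmap l j0).1 ↔ p.1 ≤ l.1 := by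
    intro p l
    have := hauto (Sum.inl (p, i0)) (Sum.inr (l, j0))
    rw [hpmap p i0, hlmap l j0] at this
    simpa only [adj_inl_inr] using this
  have hSiff : ∀ p, p ∈ Spts F ↔ pmap p i0 ∈ Spts F := fun p => hpS p i0 rfl
  obtain ⟨gfix, hfix⟩ := S_rigid (q := q) hq5 hcast (fun p => pmap p i0)
    (fun p => pmap' p i0) (fun l => lmap l j0) inc hg'g hgg' hSiff
  have hlall : ∀ (l : Ln F) (j : Fin s), lmap l j = l := by
    intro l j
    apply line_eq_of_points
    intro p
    have := hauto (Sum.inl (p, i0)) (Sum.inr (l, j))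
    rw [hpmap p i0, hlmap l j] at this
    simp only [adj_inl_inr] at this
    have hgp : pmap p i0 = p := gfix p
    rw [hgp] at this
    rw [this]
  have hpall : ∀ (p : Pt F) (i : Fin r), pmap p i = p := by
    intro p i
    apply point_eq_of_pencil
    intro l
    have := hauto (Sum.inl (p, i)) (Sum.inr (l, j0))
    rw [hpmap p i, hlmap l j0] at this
    simp only [adj_inl_inr] at this
    rw [hlall l j0] at this
    exact this
  apply Equiv.ext
  rintro (⟨p, i⟩ | ⟨l, j⟩)
  · rw [hpmap p i, hpall p i]
    rfl
  · rw [hlmap l j, hlall l j]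
    rfl

end Upper


section Lower

lemma swap_is_auto {W : Type*} [DecidableEq W] (G : SimpleGraph W) (u v : W)
    (hnadj : ¬ G.Adj u v) (hsame : ∀ w, G.Adj u w ↔ G.Adj v w) :
    IsGraphAutomorphism G (Equiv.swap u v) := by
  have hsame' : ∀ w, G.Adj w u ↔ G.Adj w v := fun w => by
    rw [G.adj_comm w u, G.adj_comm w v]; exact hsame w
  intro a b
  by_cases ha1 : a = u
  · by_cases hb1 : b = u
    · rw [ha1, hb1, Equiv.swap_apply_left]
      exact iff_of_false (G.loopless.irrefl v) (G.loopless.irrefl u)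
    · by_cases hb2 : b = v
      · rw [ha1, hb2, Equiv.swap_apply_left, Equiv.swap_apply_right]
        exact iff_of_false (fun h => hnadj h.symm) hnadj
      · rw [ha1, Equiv.swap_apply_left, Equiv.swap_apply_of_ne_of_ne hb1 hb2]
        exact (hsame b).symm
  · by_cases ha2 : a = v
    · by_cases hb1 : b = u
      · rw [ha2, hb1, Equiv.swap_apply_right, Equiv.swap_apply_left]
        exact iff_of_false hnadj (fun h => hnadj h.symm)
      · by_cases hb2 : b = v
        · rw [ha2, hb2, Equiv.swap_apply_right]
          exact iff_of_false (G.loopless.irrefl u) (G.loopless.irrefl v)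
        · rw [ha2, Equiv.swap_apply_right, Equiv.swap_apply_of_ne_of_ne hb1 hb2]
          exact hsame b
    · rw [Equiv.swap_apply_of_ne_of_ne ha1 ha2]
      by_cases hb1 : b = u
      · rw [hb1, Equiv.swap_apply_left]
        exact (hsame' a).symm
      · by_cases hb2 : b = v
        · rw [hb2, Equiv.swap_apply_right]
          exact hsame' a
        · rw [Equiv.swap_apply_of_ne_of_ne hb1 hb2]

/-- the coordinate swap linear automorphism -/
def swLin : V3 F ≃ₗ[F] V3 F where
  toFun := fun v => ![v 1, v 0, v 2]
  invFun := fun v => ![v 1, v 0, v 2]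
  map_add' := by
    intro a b
    funext i
    fin_cases i <;> simp
  map_smul' := by
    intro c a
    funext i
    fin_cases i <;> simp
  left_inv := by
    intro v
    funext i
    fin_cases i <;> simp
  right_inv := by
    intro v
    funext i
    fin_cases i <;> simp

noncomputable def subIso : Submodule F (V3 F) ≃o Submodule F (V3 F) :=
  Submodule.orderIsoMapComap (swLin (F := F))

lemma subIso_finrank (W : Submodule F (V3 F)) :
    finrank F (subIso (F := F) W) = finrank F W := by
  show finrank F (Submodule.map _ W) = _
  exact LinearEquiv.finrank_map_eq _ _

lemma subIso_symm_finrank (W : Submodule F (V3 F)) :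
    finrank F ((subIso (F := F)).symm W) = finrank F W := by
  conv_rhs => rw [← (subIso (F := F)).apply_symm_apply W]
  rw [subIso_finrank]

noncomputable def gHat : Pt F ≃ Pt F where
  toFun := fun p => ⟨subIso (F := F) p.1, by rw [subIso_finrank]; exact p.2⟩
  invFun := fun p => ⟨(subIso (F := F)).symm p.1, by rw [subIso_symm_finrank]; exact p.2⟩
  left_inv := fun p => Subtype.ext ((subIso (F := F)).symm_apply_apply p.1)
  right_inv := fun p => Subtype.ext ((subIso (F := F)).apply_symm_apply p.1)

noncomputable def hHat : Ln F ≃ Ln F where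
  toFun := fun l => ⟨subIso (F := F) l.1, by rw [subIso_finrank]; exact l.2⟩
  invFun := fun l => ⟨(subIso (F := F)).symm l.1, by rw [subIso_symm_finrank]; exact l.2⟩
  left_inv := fun l => Subtype.ext ((subIso (F := F)).symm_apply_apply l.1)
  right_inv := fun l => Subtype.ext ((subIso (F := F)).apply_symm_apply l.1)

lemma gHat_le_iff (p : Pt F) (l : Ln F) : (gHat p).1 ≤ (hHat l).1 ↔ p.1 ≤ l.1 := by
  show subIso (F := F) p.1 ≤ subIso (F := F) l.1 ↔ _
  exact (subIso (F := F)).le_iff_le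

lemma gHat_ne : gHat (ptA F) ≠ ptA F := by
  intro he
  have hmem : (swLin (F := F)) ![1,0,0] ∈ (gHat (ptA F)).1 :=
    Submodule.mem_map_of_mem (mem_span_singleton_self _)
  rw [he] at hmem
  have hsw : (swLin (F := F)) ![1,0,0] = ![0,1,0] := by
    funext i
    fin_cases i <;> rfl
  rw [hsw] at hmem
  obtain ⟨c, hc⟩ := mem_span_singleton.mp hmem
  have h1 := congrFun hc 1
  simp at h1

theorem lower_bound (r s n : ℕ) (hr : 2 ≤ r) (hs : 2 ≤ s)
    (C : (LeviTensor F r s).Coloring (Fin n)) (hD : IsDistinguishing (LeviTensor F r s) C) :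
    r + s + 1 ≤ n := by
  classical
  have hr0 : 0 < r := by omega
  have hs0 : 0 < s := by omega
  by_contra hlt
  push_neg at hlt
  -- rainbow fibers
  have rainP : ∀ (p : Pt F) (i i' : Fin r), C (Sum.inl (p,i)) = C (Sum.inl (p,i')) → i = i' := by
    intro p i i' hcc
    by_contra hne
    have hne' : (Sum.inl (p,i) : (SubspaceDim F 1 × Fin r) ⊕ (SubspaceDim F 2 × Fin s))
        ≠ Sum.inl (p,i') := fun hh => hne (by
      have := (Sum.inl.injEq _ _).mp hh
      exact congrArg Prod.snd this)
    have hato := swap_is_auto (LeviTensor F r s)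
      ((Sum.inl (p,i)) : (SubspaceDim F 1 × Fin r) ⊕ (SubspaceDim F 2 × Fin s)) (Sum.inl (p,i'))
      (not_adj_inl_inl F r s _ _) (fun w => by
      rcases w with x | y
      · exact iff_of_false (not_adj_inl_inl F r s _ _) (not_adj_inl_inl F r s _ _)
      · exact Iff.rfl)
    have hcolsw : ∀ v, C ((Equiv.swap ((Sum.inl (p,i)) : (SubspaceDim F 1 × Fin r) ⊕ (SubspaceDim F 2 × Fin s)) (Sum.inl (p,i'))) v) = C v := by
      intro v
      rcases eq_or_ne v (Sum.inl (p,i)) with rfl | h1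
      · rw [Equiv.swap_apply_left]
        exact hcc.symm
      · rcases eq_or_ne v (Sum.inl (p,i')) with rfl | h2
        · rw [Equiv.swap_apply_right]
          exact hcc
        · rw [Equiv.swap_apply_of_ne_of_ne h1 h2]
    have h1 := hD _ hato hcolsw
    have h2 : Equiv.swap ((Sum.inl (p,i)) : (SubspaceDim F 1 × Fin r) ⊕ (SubspaceDim F 2 × Fin s))
        (Sum.inl (p,i')) (Sum.inl (p,i)) = (Sum.inl (p,i)) := by rw [h1]; rfl
    rw [Equiv.swap_apply_left] at h2
    exact hne' h2.symm
  have rainL : ∀ (l : Ln F) (j j' : Fin s), C (Sum.inr (l,j)) = C (Sum.inr (l,j')) → j = j' := by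
    intro l j j' hcc
    by_contra hne
    have hne' : (Sum.inr (l,j) : (SubspaceDim F 1 × Fin r) ⊕ (SubspaceDim F 2 × Fin s))
        ≠ Sum.inr (l,j') := fun hh => hne (by
      have := (Sum.inr.injEq _ _).mp hh
      exact congrArg Prod.snd this)
    have hato := swap_is_auto (LeviTensor F r s)
      ((Sum.inr (l,j)) : (SubspaceDim F 1 × Fin r) ⊕ (SubspaceDim F 2 × Fin s)) (Sum.inr (l,j'))
      (not_adj_inr_inr F r s _ _) (fun w => by
      rcases w with x | y
      · exact Iff.rfl
      · exact iff_of_false (not_adj_inr_inr F r s _ _) (not_adj_inr_inr F r s _ _))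
    have hcolsw : ∀ v, C ((Equiv.swap ((Sum.inr (l,j)) : (SubspaceDim F 1 × Fin r) ⊕ (SubspaceDim F 2 × Fin s)) (Sum.inr (l,j'))) v) = C v := by
      intro v
      rcases eq_or_ne v (Sum.inr (l,j)) with rfl | h1
      · rw [Equiv.swap_apply_left]
        exact hcc.symm
      · rcases eq_or_ne v (Sum.inr (l,j')) with rfl | h2
        · rw [Equiv.swap_apply_right]
          exact hcc
        · rw [Equiv.swap_apply_of_ne_of_ne h1 h2]
    have h1 := hD _ hato hcolsw
    have h2 : Equiv.swap ((Sum.inr (l,j)) : (SubspaceDim F 1 × Fin r) ⊕ (SubspaceDim F 2 × Fin s))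
        (Sum.inr (l,j')) (Sum.inr (l,j)) = (Sum.inr (l,j)) := by rw [h1]; rfl
    rw [Equiv.swap_apply_left] at h2
    exact hne' h2.symm
  set fP : Pt F → Fin r → Fin n := fun p i => C (Sum.inl (p,i)) with hfP
  set fL : Ln F → Fin s → Fin n := fun l j => C (Sum.inr (l,j)) with hfL
  have finjP : ∀ p, Function.Injective (fP p) := fun p i i' hcc => rainP p i i' hcc
  have finjL : ∀ l, Function.Injective (fL l) := fun l j j' hcc => rainL l j j' hcc
  set TP : Pt F → Finset (Fin n) := fun p => Finset.image (fP p) Finset.univ with hTP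
  set TL : Ln F → Finset (Fin n) := fun l => Finset.image (fL l) Finset.univ with hTL
  have cardP : ∀ p, (TP p).card = r := by
    intro p
    rw [hTP]
    rw [Finset.card_image_of_injective _ (finjP p), Finset.card_univ, Fintype.card_fin]
  have cardL : ∀ l, (TL l).card = s := by
    intro l
    rw [hTL]
    rw [Finset.card_image_of_injective _ (finjL l), Finset.card_univ, Fintype.card_fin]
  have disj : ∀ (p : Pt F) (l : Ln F), p.1 ≤ l.1 → Disjoint (TP p) (TL l) := by
    intro p l hle
    rw [Finset.disjoint_left]
    intro a haP haL
    obtain ⟨i, -, rfl⟩ := Finset.mem_image.mp haP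
    obtain ⟨j, -, hj⟩ := Finset.mem_image.mp haL
    exact C.valid ((adj_inl_inr F r s (p,i) (l,j)).mpr hle) hj.symm
  have hn : n = r + s := by
    have h1 := Finset.card_le_univ (TP (ptA F) ∪ TL (lnL1 F))
    rw [Finset.card_union_of_disjoint (disj _ _ (A_le_L1 F)), cardP, cardL] at h1
    simp only [Finset.card_univ, Fintype.card_fin] at h1
    omega
  have hunion : ∀ (p : Pt F) (l : Ln F), p.1 ≤ l.1 → TP p ∪ TL l = Finset.univ := by
    intro p l hle
    apply Finset.eq_univ_of_card
    rw [Finset.card_union_of_disjoint (disj p l hle), cardP, cardL, Fintype.card_fin]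
    omega
  have hcomplL : ∀ (l : Ln F) (p : Pt F), p.1 ≤ l.1 → TL l = (TP p)ᶜ := by
    intro l p hle
    ext a
    simp only [Finset.mem_compl]
    constructor
    · intro haL haP
      exact (Finset.disjoint_left.mp (disj p l hle)) haP haL
    · intro haP
      have hu : a ∈ TP p ∪ TL l := (hunion p l hle).symm ▸ Finset.mem_univ a
      rcases Finset.mem_union.mp hu with hh | hh
      · exact absurd hh haP
      · exact hh
  have hsameP : ∀ p p' : Pt F, TP p = TP p' := by
    intro p p'
    rcases eq_or_ne p p' with rfl | hne
    · rfl
    · have h1 := hcomplL (lineMk p p' hne) p le_sup_left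
      have h2 := hcomplL (lineMk p p' hne) p' le_sup_right
      rw [h1] at h2
      have := congrArg (fun t => tᶜ) h2
      simpa using this
  have hsameL : ∀ l l' : Ln F, TL l = TL l' := by
    intro l l'
    obtain ⟨p, -, -, hple, -⟩ := line_two_points l
    obtain ⟨p', -, -, hple', -⟩ := line_two_points l'
    rw [hcomplL l p hple, hcomplL l' p' hple', hsameP p p']
  -- construct a nontrivial color-preserving automorphism
  have hrangeP : ∀ p p' : Pt F, Set.range (fP p) = Set.range (fP p') := by
    intro p p'
    have h1 : Set.range (fP p) = ↑(TP p) := by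
      rw [hTP, Finset.coe_image, Finset.coe_univ, Set.image_univ]
    have h2 : Set.range (fP p') = ↑(TP p') := by
      rw [hTP, Finset.coe_image, Finset.coe_univ, Set.image_univ]
    rw [h1, h2, hsameP p p']
  have hrangeL : ∀ l l' : Ln F, Set.range (fL l) = Set.range (fL l') := by
    intro l l'
    have h1 : Set.range (fL l) = ↑(TL l) := by
      rw [hTL, Finset.coe_image, Finset.coe_univ, Set.image_univ]
    have h2 : Set.range (fL l') = ↑(TL l') := by
      rw [hTL, Finset.coe_image, Finset.coe_univ, Set.image_univ]
    rw [h1, h2, hsameL l l']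
  set π : ∀ _ : Pt F, Fin r ≃ Fin r := fun p =>
    (Equiv.ofInjective _ (finjP p)).trans ((Equiv.setCongr (hrangeP p (gHat p))).trans
      (Equiv.ofInjective _ (finjP (gHat p))).symm) with hπdef
  set ρ : ∀ _ : Ln F, Fin s ≃ Fin s := fun l =>
    (Equiv.ofInjective _ (finjL l)).trans ((Equiv.setCongr (hrangeL l (hHat l))).trans
      (Equiv.ofInjective _ (finjL (hHat l))).symm) with hρdef
  have hπ : ∀ p i, fP (gHat p) (π p i) = fP p i := by
    intro p i
    have h1 := Equiv.apply_ofInjective_symm (finjP (gHat p))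
      ((Equiv.setCongr (hrangeP p (gHat p))) ((Equiv.ofInjective _ (finjP p)) i))
    simpa [hπdef] using h1
  have hρ : ∀ l j, fL (hHat l) (ρ l j) = fL l j := by
    intro l j
    have h1 := Equiv.apply_ofInjective_symm (finjL (hHat l))
      ((Equiv.setCongr (hrangeL l (hHat l))) ((Equiv.ofInjective _ (finjL l)) j))
    simpa [hρdef] using h1
  set σ : Equiv.Perm ((SubspaceDim F 1 × Fin r) ⊕ (SubspaceDim F 2 × Fin s)) :=
    Equiv.sumCongr (Equiv.prodShear gHat π) (Equiv.prodShear hHat ρ) with hσdef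
  have hσinl : ∀ (p : Pt F) (i : Fin r), σ (Sum.inl (p,i)) = Sum.inl (gHat p, π p i) := by
    intro p i
    rfl
  have hσinr : ∀ (l : Ln F) (j : Fin s), σ (Sum.inr (l,j)) = Sum.inr (hHat l, ρ l j) := by
    intro l j
    rfl
  have hato : IsGraphAutomorphism (LeviTensor F r s) σ := by
    rintro (⟨p,i⟩ | ⟨l,j⟩) (⟨p',i'⟩ | ⟨l',j'⟩)
    · exact iff_of_false (not_adj_inl_inl F r s _ _) (not_adj_inl_inl F r s _ _)
    · rw [hσinl, hσinr, adj_inl_inr, adj_inl_inr]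
      exact gHat_le_iff p l'
    · rw [hσinl, hσinr, adj_inr_inl, adj_inr_inl]
      exact gHat_le_iff p' l
    · exact iff_of_false (not_adj_inr_inr F r s _ _) (not_adj_inr_inr F r s _ _)
  have hcols : ∀ v, C (σ v) = C v := by
    rintro (⟨p,i⟩ | ⟨l,j⟩)
    · rw [hσinl]
      exact hπ p i
    · rw [hσinr]
      exact hρ l j
  have h1 := hD σ hato hcols
  have h2 : σ (Sum.inl (ptA F, ⟨0, hr0⟩)) = Sum.inl (ptA F, ⟨0, hr0⟩) := by rw [h1]; rfl
  rw [hσinl] at h2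
  have h3 := (Sum.inl.injEq _ _).mp h2
  exact gHat_ne (congrArg Prod.fst h3)

end Lower

end LT16


/-- For a prime `q ≥ 5` and integers `r, s ≥ 2`, the distinguishing chromatic number
of `LG_q ⊗ K_{r,s}` equals `r + s + 1`. -/
theorem stmt16 (q : ℕ) (hq : Nat.Prime q) (hq5 : 5 ≤ q) (r s : ℕ) (hr : 2 ≤ r) (hs : 2 ≤ s)
    (F : Type) [Field F] [Fintype F] (hF : Fintype.card F = q) :
    distChromNum (LeviTensor F r s) = r + s + 1 := by
  classical
  haveI : Fact (Nat.Prime q) := ⟨hq⟩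
  haveI hchar : CharP F q := by
    have e := ZMod.ringEquivOfPrime F hq hF
    exact charP_of_injective_ringHom e.toRingHom.injective q
  have hcast : ∀ x : F, ∃ n : ℕ, x = (n : F) := by
    intro x
    have e := ZMod.ringEquivOfPrime F hq hF
    refine ⟨(e.symm x).val, ?_⟩
    calc x = e (e.symm x) := (e.apply_symm_apply x).symm
      _ = e (((e.symm x).val : ℕ) : ZMod q) := by rw [ZMod.natCast_val, ZMod.cast_id]
      _ = (((e.symm x).val : ℕ) : F) := by rw [map_natCast]
  have hmem : (r + s + 1) ∈ {n : ℕ |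
      ∃ C : (LeviTensor F r s).Coloring (Fin n), IsDistinguishing (LeviTensor F r s) C} :=
    ⟨LT16.upColoring F r s, LT16.upper_dist F r s q hq5 hcast (by omega) (by omega)⟩
  apply le_antisymm
  · exact Nat.sInf_le hmem
  · refine le_csInf ⟨_, hmem⟩ ?_
    rintro n ⟨C, hC⟩
    exact LT16.lower_bound r s n hr hs C hC
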